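/- Let E be a finite set, ℓ ≥ 1, and let f : 2^E → ℝ be monotone nondecreasing, nonnegative, submodular, with f(∅) = 0 and curvature at most κ ∈ [0,1], i.e. f(A ∪ {e}) − f(A) ≥ (1−κ)·f({e}) for all A ⊆ E and e ∉ A. Set w(e) = (1−κ)·f({e}), l(A) = Σ_{e∈A} w(e), and g = f − l. Let S ⊆ E × [ℓ] have pairwise distinct first coordinates, let OPT ⊆ E with |OPT| = |S|, and for each j ∈ [ℓ] let h_j : S → OPT be a bijection with h_j((u,k)) = u whenever u ∈ OPT. If Φ_f(S) ≥ Φ_f(S − (u,k) + (h_j((u,k)), j)) for every (u,k) ∈ S and j ∈ [ℓ], where Φ_f(T) = Φ_g(T) + l(π_{[ℓ]}(T)) is built with γ = 1, then f(π_{[ℓ]}(S)) ≥ (1 − κ·(1 + 1/ℓ)^{−ℓ})·f(OPT). -/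

import Mathlib

open Finset

/-- `π_J(S)`: first coordinates of pairs in `S` whose second coordinate lies in `J`. -/
def proj {E : Type*} [DecidableEq E] (S : Finset (E × ℕ)) (J : Finset ℕ) : Finset E :=
  (S.filter (fun p => p.2 ∈ J)).image Prod.fst

/-- `α_i = (1+c)^(i-1) / C(ℓ-1, i-1)`. -/
noncomputable def alphaCoef (ℓ : ℕ) (c : ℝ) (i : ℕ) : ℝ :=
  (1 + c) ^ (i - 1) / ((ℓ - 1).choose (i - 1) : ℝ)

/-- The potential `Φ_g(S) = (γ/ℓ)(1+γ³/ℓ)^{-ℓ} Σ_{∅≠J⊆[ℓ]} α_{|J|} g(π_J(S))`. -/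
noncomputable def Phi {E : Type*} [DecidableEq E] (ℓ : ℕ) (γ : ℝ) (g : Finset E → ℝ)
    (S : Finset (E × ℕ)) : ℝ :=
  (γ / ℓ) * (1 + γ ^ 3 / ℓ) ^ (-(ℓ : ℤ)) *
    ∑ J ∈ (Finset.Icc 1 ℓ).powerset.filter (fun J => J.Nonempty),
      alphaCoef ℓ (γ ^ 3 / ℓ) J.card * g (proj S J)

section Helpers
variable {E : Type*} [DecidableEq E]

lemma sum_erase_le (g : Finset E → ℝ)
    (hsub : ∀ A B : Finset E, g A + g B ≥ g (A ∪ B) + g (A ∩ B)) :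
    ∀ (U B : Finset E), U ⊆ B → ∑ u ∈ U, (g B - g (B.erase u)) ≤ g B - g (B \ U) := by
  intro U
  induction U using Finset.induction_on with
  | empty => intro B _; simp
  | insert a U' ha IH =>
    intro B hUB
    have haB : a ∈ B := hUB (mem_insert_self a U')
    have hU'B : U' ⊆ B := (subset_insert a U').trans hUB
    rw [Finset.sum_insert ha]
    have key : g B + g (B \ insert a U') ≤ g (B.erase a) + g (B \ U') := by
      have h1 : (B.erase a) ∪ (B \ U') = B := by
        apply Finset.Subset.antisymm
        · exact Finset.union_subset (erase_subset a B) (sdiff_subset)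
        · intro b hb
          by_cases hba : b = a
          · subst hba; exact mem_union_right _ (mem_sdiff.2 ⟨hb, ha⟩)
          · exact mem_union_left _ (mem_erase.2 ⟨hba, hb⟩)
      have h2 : (B.erase a) ∩ (B \ U') = B \ insert a U' := by
        ext b
        simp only [mem_inter, mem_erase, mem_sdiff, mem_insert]
        tauto
      have := hsub (B.erase a) (B \ U')
      rw [h1, h2] at this
      linarith
    have := IH B hU'B
    linarith

lemma union_le_sum_insert (g : Finset E → ℝ)
    (hsub : ∀ A B : Finset E, g A + g B ≥ g (A ∪ B) + g (A ∩ B))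
    (hmono : ∀ A B : Finset E, A ⊆ B → g A ≤ g B) :
    ∀ (O X : Finset E), g (X ∪ O) - g X ≤ ∑ o ∈ O, (g (insert o X) - g X) := by
  intro O
  induction O using Finset.induction_on with
  | empty => intro X; simp
  | insert o O' ho IH =>
    intro X
    rw [Finset.sum_insert ho]
    have key : g (X ∪ insert o O') + g X ≤ g (insert o X) + g (X ∪ O') := by
      have h1 : (insert o X) ∪ (X ∪ O') = X ∪ insert o O' := by
        ext b; simp only [mem_union, mem_insert]; tauto
      have h2 : g X ≤ g ((insert o X) ∩ (X ∪ O')) := by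
        apply hmono
        exact subset_inter (subset_insert o X) Finset.subset_union_left
      have := hsub (insert o X) (X ∪ O')
      rw [h1] at this
      linarith
    have := IH X
    linarith

lemma proj_insert' (T : Finset (E × ℕ)) (q : E × ℕ) (J : Finset ℕ) :
    proj (insert q T) J = if q.2 ∈ J then insert q.1 (proj T J) else proj T J := by
  simp only [proj, Finset.filter_insert]
  split <;> simp [Finset.image_insert]

lemma proj_erase' (S : Finset (E × ℕ))
    (hdist : ∀ p ∈ S, ∀ q ∈ S, p.1 = q.1 → p = q)
    (p : E × ℕ) (hp : p ∈ S) (J : Finset ℕ) :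
    proj (S.erase p) J = if p.2 ∈ J then (proj S J).erase p.1 else proj S J := by
  split_ifs with hpJ
  · ext u
    simp only [proj, mem_image, mem_filter, mem_erase]
    constructor
    · rintro ⟨q, ⟨⟨hqp, hqS⟩, hqJ⟩, rfl⟩
      refine ⟨fun hu => hqp (hdist q hqS p hp hu), q, ⟨hqS, hqJ⟩, rfl⟩
    · rintro ⟨hup, q, ⟨hqS, hqJ⟩, rfl⟩
      exact ⟨q, ⟨⟨fun hq => hup (by rw [hq]), hqS⟩, hqJ⟩, rfl⟩
  · ext u
    simp only [proj, mem_image, mem_filter, mem_erase]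
    constructor
    · rintro ⟨q, ⟨⟨_, hqS⟩, hqJ⟩, rfl⟩
      exact ⟨q, ⟨hqS, hqJ⟩, rfl⟩
    · rintro ⟨q, ⟨hqS, hqJ⟩, rfl⟩
      refine ⟨q, ⟨⟨fun hq => hpJ ?_, hqS⟩, hqJ⟩, rfl⟩
      subst hq; exact hqJ

lemma proj_subset_right (S : Finset (E × ℕ)) {J J' : Finset ℕ} (hJ : J ⊆ J') :
    proj S J ⊆ proj S J' := by
  apply Finset.image_subset_image
  intro p hp; simp only [Finset.mem_filter] at hp ⊢; exact ⟨hp.1, hJ hp.2⟩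

lemma proj_sdiff (S : Finset (E × ℕ))
    (hdist : ∀ p ∈ S, ∀ q ∈ S, p.1 = q.1 → p = q) (J : Finset ℕ) (k : ℕ) :
    proj S J \ (S.filter (fun p => p.2 = k)).image Prod.fst = proj S (J.erase k) := by
  ext u
  simp only [proj, mem_sdiff, mem_image, mem_filter, mem_erase]
  constructor
  · rintro ⟨⟨q, ⟨hqS, hqJ⟩, rfl⟩, hnk⟩
    refine ⟨q, ⟨hqS, ⟨fun hq => hnk ⟨q, ⟨hqS, hq⟩, rfl⟩, hqJ⟩⟩, rfl⟩
  · rintro ⟨q, ⟨hqS, hkJ, hqJ⟩, rfl⟩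
    refine ⟨⟨q, ⟨hqS, hqJ⟩, rfl⟩, ?_⟩
    rintro ⟨r, ⟨hrS, hrk⟩, hru⟩
    exact hkJ (by rw [← hdist q hqS r hrS hru.symm] at hrk; exact hrk)

lemma alpha_nonneg (ℓ : ℕ) (c : ℝ) (hc : 0 ≤ c) (i : ℕ) : 0 ≤ alphaCoef ℓ c i := by
  apply div_nonneg (pow_nonneg (by linarith) _) (Nat.cast_nonneg _)

lemma alpha_rec (ℓ i : ℕ) (c : ℝ) (h1 : 1 ≤ i) (h2 : i < ℓ) :
    ((ℓ - i : ℕ) : ℝ) * alphaCoef ℓ c (i + 1) = (1 + c) * i * alphaCoef ℓ c i := by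
  obtain ⟨k, rfl⟩ : ∃ k, i = k + 1 := ⟨i - 1, (Nat.succ_pred_eq_of_pos h1).symm⟩
  obtain ⟨n, rfl⟩ : ∃ n, ℓ = n + 1 := ⟨ℓ - 1, (Nat.succ_pred_eq_of_pos (by omega)).symm⟩
  have hkn : k + 1 ≤ n := by omega
  have hc1 : (n.choose (k+1) : ℝ) ≠ 0 := Nat.cast_ne_zero.2 (Nat.choose_pos hkn).ne'
  have hc0 : (n.choose k : ℝ) ≠ 0 := Nat.cast_ne_zero.2 (Nat.choose_pos (by omega)).ne'
  have key : (n.choose (k+1) : ℝ) * (k+1) = (n.choose k : ℝ) * ((n - k : ℕ) : ℝ) := by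
    exact_mod_cast congrArg (Nat.cast : ℕ → ℝ) (Nat.choose_succ_right_eq n k)
  have hnk : ((n + 1 - (k + 1) : ℕ) : ℝ) = ((n - k : ℕ) : ℝ) := by
    congr 1
    omega
  simp only [alphaCoef, Nat.add_sub_cancel, hnk]
  rw [pow_succ]
  field_simp
  push_cast
  linear_combination (-(1 + c) ^ k * (1 + c)) * key

lemma choose_mul_alpha (ℓ i : ℕ) (c : ℝ) (h1 : 1 ≤ i) (h2 : i ≤ ℓ) :
    (ℓ.choose i : ℝ) * i * alphaCoef ℓ c i = ℓ * (1 + c) ^ (i - 1) := by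
  obtain ⟨k, rfl⟩ : ∃ k, i = k + 1 := ⟨i - 1, (Nat.succ_pred_eq_of_pos h1).symm⟩
  obtain ⟨n, rfl⟩ : ∃ n, ℓ = n + 1 := ⟨ℓ - 1, (Nat.succ_pred_eq_of_pos (by omega)).symm⟩
  have hkn : k ≤ n := by omega
  have hc0 : (n.choose k : ℝ) ≠ 0 := Nat.cast_ne_zero.2 (Nat.choose_pos hkn).ne'
  have key : ((n+1 : ℕ) : ℝ) * (n.choose k : ℝ) = ((n+1).choose (k+1) : ℝ) * ((k+1 : ℕ) : ℝ) := by
    exact_mod_cast congrArg (Nat.cast : ℕ → ℝ) (Nat.add_one_mul_choose_eq n k)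
  simp only [alphaCoef, Nat.add_sub_cancel]
  push_cast at key ⊢
  field_simp
  linear_combination (-(1 + c) ^ k) * key

end Helpers

set_option maxHeartbeats 1000000 in
theorem stmt_3 {E : Type*} [Fintype E] [DecidableEq E] (ℓ : ℕ) (hℓ : 1 ≤ ℓ)
    (f : Finset E → ℝ)
    (hmono : ∀ A B : Finset E, A ⊆ B → f A ≤ f B)
    (hnonneg : ∀ A : Finset E, 0 ≤ f A) (hempty : f ∅ = 0)
    (hsub : ∀ A B : Finset E, f A + f B ≥ f (A ∪ B) + f (A ∩ B))
    (κ : ℝ) (hκ0 : 0 ≤ κ) (hκ1 : κ ≤ 1)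
    (hcurv : ∀ A : Finset E, ∀ e ∉ A, f (insert e A) - f A ≥ (1 - κ) * f {e})
    (w : E → ℝ) (hw : ∀ e, w e = (1 - κ) * f {e})
    (l : Finset E → ℝ) (hl : ∀ A : Finset E, l A = ∑ e ∈ A, w e)
    (g : Finset E → ℝ) (hg : ∀ A : Finset E, g A = f A - l A)
    (S : Finset (E × ℕ)) (hS : ∀ p ∈ S, p.2 ∈ Finset.Icc 1 ℓ)
    (hdist : ∀ p ∈ S, ∀ q ∈ S, p.1 = q.1 → p = q)
    (OPT : Finset E) (hcard : OPT.card = S.card)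
    (h : ℕ → E × ℕ → E)
    (hbij : ∀ j ∈ Finset.Icc 1 ℓ, Set.BijOn (h j) ↑S ↑OPT)
    (hfix : ∀ j ∈ Finset.Icc 1 ℓ, ∀ p ∈ S, p.1 ∈ OPT → h j p = p.1)
    (Φf : Finset (E × ℕ) → ℝ)
    (hΦf : ∀ T : Finset (E × ℕ), Φf T = Phi ℓ 1 g T + l (proj T (Finset.Icc 1 ℓ)))
    (hlocal : ∀ p ∈ S, ∀ j ∈ Finset.Icc 1 ℓ,
      Φf S ≥ Φf (insert (h j p, j) (S.erase p))) :
    f (proj S (Finset.Icc 1 ℓ)) ≥ (1 - κ * (1 + 1 / (ℓ : ℝ)) ^ (-(ℓ : ℤ))) * f OPT := by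
  classical
  -- notation
  set L : Finset ℕ := Finset.Icc 1 ℓ with hLdef
  have hLcard : L.card = ℓ := by simp [hLdef]
  set P : Finset (Finset ℕ) := L.powerset with hPdef
  set Pow : Finset (Finset ℕ) := P.filter (fun J => J.Nonempty) with hPowdef
  have hℓR : (0:ℝ) < (ℓ:ℝ) := by exact_mod_cast Nat.pos_of_ne_zero (by omega)
  set c : ℝ := 1 / (ℓ:ℝ) with hcdef
  have hc0 : 0 < c := by positivity
  have hc1 : (0:ℝ) < 1 + c := by linarith
  set β : ℝ := (1 + c) ^ (-(ℓ:ℤ)) with hβdef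
  have hβ0 : 0 < β := zpow_pos hc1 _
  set α : ℕ → ℝ := fun i => alphaCoef ℓ c i with hαdef
  have hα' : ∀ i, alphaCoef ℓ c i = α i := fun _ => rfl
  have hα0 : ∀ i, 0 ≤ α i := fun i => alpha_nonneg ℓ c hc0.le i
  set A : Finset ℕ → Finset E := fun J => proj S J with hAdef
  set S' : E × ℕ → ℕ → Finset (E × ℕ) := fun p j => insert (h j p, j) (S.erase p) with hS'def
  set D : Finset ℕ → ℝ := fun J => ∑ k ∈ J, (g (A J) - g (A (J.erase k))) with hDdef
  -- basic properties of w, l, g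
  have hwnn : ∀ e, 0 ≤ w e := by
    intro e; rw [hw]; exact mul_nonneg (by linarith) (hnonneg _)
  have hlmod : ∀ X Y : Finset E, l X + l Y = l (X ∪ Y) + l (X ∩ Y) := by
    intro X Y; simp only [hl]; rw [Finset.sum_union_inter]
  have hgsub : ∀ X Y : Finset E, g X + g Y ≥ g (X ∪ Y) + g (X ∩ Y) := by
    intro X Y; simp only [hg]
    have := hsub X Y
    have := hlmod X Y
    linarith
  have hg0 : g ∅ = 0 := by simp [hg, hl, hempty]
  have hginsert : ∀ (X : Finset E) (e : E), g X ≤ g (insert e X) := by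
    intro X e
    by_cases he : e ∈ X
    · rw [Finset.insert_eq_self.2 he]
    · have h1 := hcurv X e he
      have h2 : l (insert e X) = w e + l X := by
        simp only [hl]; rw [Finset.sum_insert he]
      simp only [hg]
      rw [h2, hw e]
      linarith
  have hgmono : ∀ X Y : Finset E, X ⊆ Y → g X ≤ g Y := by
    have key : ∀ (C X : Finset E), g X ≤ g (X ∪ C) := by
      intro C
      induction C using Finset.induction_on with
      | empty => intro X; simp
      | insert e C' hC IH =>
        intro X
        calc g X ≤ g (X ∪ C') := IH X
        _ ≤ g (insert e (X ∪ C')) := hginsert _ e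
        _ = g (X ∪ insert e C') := by rw [Finset.union_insert]
    intro X Y hXY
    have := key Y X
    rwa [Finset.union_eq_right.2 hXY] at this
  have hgnn : ∀ X : Finset E, 0 ≤ g X := by
    intro X; have := hgmono ∅ X (Finset.empty_subset X); rwa [hg0] at this
  -- membership facts
  have hJsubL : ∀ J ∈ P, J ⊆ L := fun J hJ => Finset.mem_powerset.1 hJ
  have hAsub : ∀ J ∈ P, A J ⊆ A L := fun J hJ => proj_subset_right S (hJsubL J hJ)
  have hAempty : A ∅ = ∅ := by simp [hAdef, proj]
  have hALmem : ∀ p ∈ S, p.1 ∈ A L := by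
    intro p hp
    exact Finset.mem_image.2 ⟨p, Finset.mem_filter.2 ⟨hp, hS p hp⟩, rfl⟩
  have hAJmem : ∀ J, ∀ p ∈ S, p.2 ∈ J → p.1 ∈ A J := by
    intro J p hp hpJ
    exact Finset.mem_image.2 ⟨p, Finset.mem_filter.2 ⟨hp, hpJ⟩, rfl⟩
  have hhO : ∀ j ∈ L, ∀ p ∈ S, h j p ∈ OPT := by
    intro j hj p hp
    exact (hbij j hj).1 hp
  have hhfix : ∀ j ∈ L, ∀ p ∈ S, h j p ∈ A L → h j p = p.1 := by
    intro j hj p hp hmem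
    obtain ⟨q, hq, hq1⟩ := Finset.mem_image.1 hmem
    have hqS : q ∈ S := (Finset.mem_filter.1 hq).1
    have hq1O : q.1 ∈ OPT := by rw [hq1]; exact hhO j hj p hp
    have : h j q = q.1 := hfix j hj q hqS hq1O
    have hpq : q = p := (hbij j hj).2.1 hqS hp (by rw [this, hq1])
    rw [hpq] at this
    exact this
  -- bijection sums
  have hbijsum : ∀ j ∈ L, ∀ F : E → ℝ, ∑ p ∈ S, F (h j p) = ∑ o ∈ OPT, F o := by
    intro j hj F
    apply Finset.sum_bij (fun p _ => h j p)
    · intro p hp; exact hhO j hj p hp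
    · intro p hp q hq heq; exact (hbij j hj).2.1 hp hq heq
    · intro o ho
      obtain ⟨p, hp, hph⟩ := (hbij j hj).2.2 ho
      exact ⟨p, hp, hph⟩
    · intro p hp; rfl
  -- removal sums bounded via fibers
  have hDJ : ∀ J ∈ P, ∑ p ∈ S.filter (fun p => p.2 ∈ J), (g (A J) - g ((A J).erase p.1)) ≤ D J := by
    intro J hJ
    have hmaps : ∀ p ∈ S.filter (fun p => p.2 ∈ J), p.2 ∈ J := fun p hp => (Finset.mem_filter.1 hp).2
    rw [← Finset.sum_fiberwise_of_maps_to hmaps]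
    apply Finset.sum_le_sum
    intro k hk
    have hff : (S.filter (fun p => p.2 ∈ J)).filter (fun p => p.2 = k)
        = S.filter (fun p => p.2 = k) := by
      ext p
      simp only [Finset.mem_filter]
      constructor
      · rintro ⟨⟨hpS, _⟩, hpk⟩; exact ⟨hpS, hpk⟩
      · rintro ⟨hpS, hpk⟩; exact ⟨⟨hpS, by rw [hpk]; exact hk⟩, hpk⟩
    rw [hff]
    have hinj : ∀ p ∈ S.filter (fun p => p.2 = k), ∀ q ∈ S.filter (fun p => p.2 = k),
        p.1 = q.1 → p = q := by
      intro p hp q hq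
      exact hdist p (Finset.mem_filter.1 hp).1 q (Finset.mem_filter.1 hq).1
    have himg := Finset.sum_image (f := fun u => g (A J) - g ((A J).erase u)) hinj
    rw [← himg]
    have hsub1 : (S.filter (fun p => p.2 = k)).image Prod.fst ⊆ A J := by
      intro u hu
      obtain ⟨p, hp, rfl⟩ := Finset.mem_image.1 hu
      obtain ⟨hpS, hpk⟩ := Finset.mem_filter.1 hp
      exact hAJmem J p hpS (by rw [hpk]; exact hk)
    have hle := sum_erase_le g hgsub _ _ hsub1
    rw [proj_sdiff S hdist J k] at hle
    exact hle
  -- pointwise exchange inequality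
  have hmain1 : ∀ J ∈ P, ∀ j ∈ L, ∀ p ∈ S,
      g (A J) - g (proj (S' p j) J) ≤
        (if p.2 ∈ J then g (A J) - g ((A J).erase p.1) else 0) +
        (if j ∈ J then g (A J) - g (insert (h j p) (A J)) else 0) := by
    intro J hJ j hj p hp
    have hproj : proj (S' p j) J =
        if j ∈ J then insert (h j p) (proj (S.erase p) J) else proj (S.erase p) J := by
      rw [hS'def]; exact proj_insert' (S.erase p) (h j p, j) J
    rw [hproj, proj_erase' S hdist p hp J]
    by_cases hpJ : p.2 ∈ J <;> by_cases hjJ : j ∈ J <;>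
        simp only [if_pos, if_neg, hpJ, hjJ, if_true, if_false]
    · -- both: submodular exchange
      have hu : p.1 ∈ A J := hAJmem J p hp hpJ
      have hun : A J ∪ insert (h j p) ((A J).erase p.1) = insert (h j p) (A J) := by
        ext b
        simp only [Finset.mem_union, Finset.mem_insert, Finset.mem_erase]
        constructor
        · rintro (hb | hb | ⟨_, hb⟩)
          · exact Or.inr hb
          · exact Or.inl hb
          · exact Or.inr hb
        · rintro (hb | hb)
          · exact Or.inr (Or.inl hb)
          · exact Or.inl hb
      have hint : g ((A J).erase p.1) ≤ g (A J ∩ insert (h j p) ((A J).erase p.1)) := by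
        apply hgmono
        exact Finset.subset_inter (Finset.erase_subset _ _)
          ((Finset.subset_insert _ _))
      have := hgsub (A J) (insert (h j p) ((A J).erase p.1))
      rw [hun] at this
      linarith
    · linarith
    · linarith
    · linarith
  -- sum over p
  have hmain2 : ∀ J ∈ P, ∀ j ∈ L,
      ∑ p ∈ S, (g (A J) - g (proj (S' p j) J)) ≤
        D J + (if j ∈ J then g (A J) - g OPT else 0) := by
    intro J hJ j hj
    have step1 : ∑ p ∈ S, (g (A J) - g (proj (S' p j) J)) ≤
        ∑ p ∈ S, ((if p.2 ∈ J then g (A J) - g ((A J).erase p.1) else 0) +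
          (if j ∈ J then g (A J) - g (insert (h j p) (A J)) else 0)) :=
      Finset.sum_le_sum (fun p hp => hmain1 J hJ j hj p hp)
    rw [Finset.sum_add_distrib] at step1
    have part1 : ∑ p ∈ S, (if p.2 ∈ J then g (A J) - g ((A J).erase p.1) else 0) ≤ D J := by
      rw [← Finset.sum_filter]
      exact hDJ J hJ
    have part2 : ∑ p ∈ S, (if j ∈ J then g (A J) - g (insert (h j p) (A J)) else 0) ≤
        (if j ∈ J then g (A J) - g OPT else 0) := by
      by_cases hjJ : j ∈ J
      · simp only [hjJ, if_true]
        rw [hbijsum j hj (fun o => g (A J) - g (insert o (A J)))]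
        have h2 := union_le_sum_insert g hgsub hgmono OPT (A J)
        have h3 : g OPT ≤ g ((A J) ∪ OPT) := hgmono _ _ Finset.subset_union_right
        have h4 : ∑ o ∈ OPT, (g (A J) - g (insert o (A J))) =
            - ∑ o ∈ OPT, (g (insert o (A J)) - g (A J)) := by
          rw [← Finset.sum_neg_distrib]
          apply Finset.sum_congr rfl
          intros; ring
        rw [h4]
        linarith
      · simp [hjJ]
    linarith
  -- sum over j
  have hmain3 : ∀ J ∈ P,
      ∑ j ∈ L, ∑ p ∈ S, (g (A J) - g (proj (S' p j) J)) ≤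
        (ℓ:ℝ) * D J + (J.card:ℝ) * (g (A J) - g OPT) := by
    intro J hJ
    have step1 : ∑ j ∈ L, ∑ p ∈ S, (g (A J) - g (proj (S' p j) J)) ≤
        ∑ j ∈ L, (D J + (if j ∈ J then g (A J) - g OPT else 0)) :=
      Finset.sum_le_sum (fun j hj => hmain2 J hJ j hj)
    rw [Finset.sum_add_distrib, Finset.sum_const, ← Finset.sum_filter,
      Finset.filter_mem_eq_inter, Finset.inter_eq_right.2 (hJsubL J hJ),
      Finset.sum_const, hLcard] at step1
    rw [nsmul_eq_mul, nsmul_eq_mul] at step1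
    exact step1
  -- reindexing identity
  have hreindex : ∑ J ∈ P, ∑ k ∈ J, (α J.card * g (A (J.erase k))) =
      ∑ J ∈ P, ((ℓ - J.card : ℕ) : ℝ) * (α (J.card + 1) * g (A J)) := by
    have hright : ∀ J ∈ P, ∑ _k ∈ L \ J, (α (J.card + 1) * g (A J)) =
        ((ℓ - J.card : ℕ) : ℝ) * (α (J.card + 1) * g (A J)) := by
      intro J hJ
      rw [Finset.sum_const, Finset.card_sdiff_of_subset (hJsubL J hJ), hLcard, nsmul_eq_mul]
    rw [← Finset.sum_congr rfl hright]
    rw [Finset.sum_sigma' P (fun J => J) (fun J k => α J.card * g (A (J.erase k)))]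
    rw [Finset.sum_sigma' P (fun J => L \ J) (fun J _k => α (J.card + 1) * g (A J))]
    apply Finset.sum_nbij' (i := fun x => (⟨x.1.erase x.2, x.2⟩ : Σ _ : Finset ℕ, ℕ))
      (j := fun x => (⟨insert x.2 x.1, x.2⟩ : Σ _ : Finset ℕ, ℕ))
    · intro x hx
      obtain ⟨hx1, hx2⟩ := Finset.mem_sigma.1 hx
      apply Finset.mem_sigma.2
      refine ⟨Finset.mem_powerset.2 ((Finset.erase_subset _ _).trans (hJsubL _ hx1)), ?_⟩
      exact Finset.mem_sdiff.2 ⟨hJsubL _ hx1 hx2, Finset.notMem_erase _ _⟩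
    · intro x hx
      obtain ⟨hx1, hx2⟩ := Finset.mem_sigma.1 hx
      obtain ⟨hx2L, hx2J⟩ := Finset.mem_sdiff.1 hx2
      apply Finset.mem_sigma.2
      refine ⟨Finset.mem_powerset.2 (Finset.insert_subset hx2L (hJsubL _ hx1)), ?_⟩
      exact Finset.mem_insert_self _ _
    · rintro ⟨J, k⟩ hx
      obtain ⟨hx1, hx2⟩ := Finset.mem_sigma.1 hx
      simp [Finset.insert_erase hx2]
    · rintro ⟨J, k⟩ hx
      obtain ⟨hx1, hx2⟩ := Finset.mem_sigma.1 hx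
      obtain ⟨hx2L, hx2J⟩ := Finset.mem_sdiff.1 hx2
      simp [Finset.erase_insert hx2J]
    · intro x hx
      obtain ⟨hx1, hx2⟩ := Finset.mem_sigma.1 hx
      have : (x.1.erase x.2).card + 1 = x.1.card := Finset.card_erase_add_one hx2
      rw [this]
  have hℓc : (ℓ:ℝ) * (1 + c) = (ℓ:ℝ) + 1 := by
    rw [hcdef]; field_simp
  -- main alpha identity
  have hexpandJ : ∀ J ∈ P, α J.card * ((ℓ:ℝ) * D J + (J.card:ℝ) * g (A J)) =
      (((ℓ:ℝ)+1) * (J.card:ℝ) * α J.card) * g (A J) -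
        (ℓ:ℝ) * ∑ k ∈ J, (α J.card * g (A (J.erase k))) := by
    intro J hJ
    have hD : D J = (J.card:ℝ) * g (A J) - ∑ k ∈ J, g (A (J.erase k)) := by
      show (∑ k ∈ J, (g (A J) - g (A (J.erase k)))) = _
      rw [Finset.sum_sub_distrib, Finset.sum_const, nsmul_eq_mul]
    rw [hD, ← Finset.mul_sum]
    ring
  have hsum1 : ∑ J ∈ P, α J.card * ((ℓ:ℝ) * D J + (J.card:ℝ) * g (A J)) =
      (ℓ:ℝ) * ((ℓ:ℝ)+1) * α ℓ * g (A L) := by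
    rw [Finset.sum_congr rfl hexpandJ, Finset.sum_sub_distrib, ← Finset.mul_sum, hreindex,
      Finset.mul_sum, ← Finset.sum_sub_distrib]
    have hLP : L ∈ P := Finset.mem_powerset_self L
    rw [Finset.sum_eq_single_of_mem L hLP]
    · rw [hLcard]
      have h0 : ((ℓ - ℓ : ℕ) : ℝ) = 0 := by simp
      rw [h0]
      ring
    · intro J hJ hJL
      by_cases hJe : J = ∅
      · subst hJe
        rw [hAempty, hg0]
        ring
      · have h1 : 1 ≤ J.card := Finset.card_pos.2 (Finset.nonempty_of_ne_empty hJe)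
        have h2 : J.card < ℓ := by
          have := Finset.card_lt_card (Finset.ssubset_iff_subset_ne.2 ⟨hJsubL J hJ, hJL⟩)
          rwa [hLcard] at this
        have hrec := alpha_rec ℓ J.card c h1 h2
        rw [hα' (J.card + 1), hα' J.card] at hrec
        linear_combination (-(ℓ:ℝ) * g (A J)) * hrec - ((J.card:ℝ) * α J.card * g (A J)) * hℓc

  -- the coefficient sum
  have hsum2 : ∑ J ∈ P, (J.card:ℝ) * α J.card = (ℓ:ℝ)^2 * ((1+c)^ℓ - 1) := by
    rw [hPdef, Finset.sum_powerset]
    have hinner : ∀ j ∈ Finset.range (L.card + 1),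
        ∑ t ∈ Finset.powersetCard j L, ((t.card:ℝ) * α t.card)
          = (ℓ.choose j : ℝ) * ((j:ℝ) * α j) := by
      intro j hj
      rw [Finset.sum_congr rfl (fun t ht => by
        rw [(Finset.mem_powersetCard.1 ht).2]), Finset.sum_const,
        Finset.card_powersetCard, hLcard, nsmul_eq_mul]
    rw [Finset.sum_congr rfl hinner, hLcard, Finset.sum_range_succ']
    have hterm : ∀ i ∈ Finset.range ℓ,
        (ℓ.choose (i+1) : ℝ) * (((i+1):ℝ) * α (i+1)) = (ℓ:ℝ) * (1+c)^i := by
      intro i hi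
      have hi' : i < ℓ := Finset.mem_range.1 hi
      have hca := choose_mul_alpha ℓ (i+1) c (by omega) (by omega)
      rw [hα' (i+1)] at hca
      rw [Nat.add_sub_cancel] at hca
      push_cast at hca ⊢
      linarith
    have hgeom : ∑ i ∈ Finset.range ℓ, ((1:ℝ)+c)^i = ((1+c)^ℓ - 1)/c := by
      rw [geom_sum_eq (by linarith : (1:ℝ)+c ≠ 1) ℓ]
      congr 1
      ring
    have hterm2 : ∀ i ∈ Finset.range ℓ,
        (ℓ.choose (i+1) : ℝ) * ((((i+1):ℕ):ℝ) * α (i+1)) = (ℓ:ℝ) * (1+c)^i := by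
      intro i hi
      have := hterm i hi
      push_cast at this ⊢
      linarith
    rw [Finset.sum_congr rfl hterm2, ← Finset.mul_sum, hgeom]
    norm_num
    rw [hcdef]
    field_simp
  -- extending sums over nonempty subsets to all subsets
  have hPowsum : ∀ F : Finset ℕ → ℝ, F ∅ = 0 → ∑ J ∈ Pow, F J = ∑ J ∈ P, F J := by
    intro F hF
    rw [hPowdef, ← Finset.sum_filter_add_sum_filter_not P (fun J => J.Nonempty) F]
    have hz : ∑ J ∈ P.filter (fun J => ¬J.Nonempty), F J = 0 := by
      apply Finset.sum_eq_zero
      intro J hJ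
      rw [Finset.not_nonempty_iff_eq_empty.1 (Finset.mem_filter.1 hJ).2]
      exact hF
    rw [hz, add_zero]
  -- the main bound on the g-part
  have hbound : ∑ J ∈ Pow, α J.card * (∑ j ∈ L, ∑ p ∈ S, (g (A J) - g (proj (S' p j) J)))
      ≤ (ℓ:ℝ) * ((ℓ:ℝ)+1) * α ℓ * g (A L) - ((ℓ:ℝ)^2 * ((1+c)^ℓ - 1)) * g OPT := by
    have step1 : ∑ J ∈ Pow, α J.card * (∑ j ∈ L, ∑ p ∈ S, (g (A J) - g (proj (S' p j) J)))
        ≤ ∑ J ∈ Pow, α J.card * ((ℓ:ℝ) * D J + (J.card:ℝ) * (g (A J) - g OPT)) := by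
      apply Finset.sum_le_sum
      intro J hJ
      exact mul_le_mul_of_nonneg_left (hmain3 J (Finset.mem_of_mem_filter J hJ)) (hα0 _)
    have step2 : ∑ J ∈ Pow, α J.card * ((ℓ:ℝ) * D J + (J.card:ℝ) * (g (A J) - g OPT))
        = ∑ J ∈ P, α J.card * ((ℓ:ℝ) * D J + (J.card:ℝ) * (g (A J) - g OPT)) := by
      apply hPowsum
      have hD0 : D ∅ = 0 := by
        show (∑ k ∈ (∅ : Finset ℕ), (g (A ∅) - g (A ((∅:Finset ℕ).erase k)))) = 0
        simp
      rw [hD0]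
      simp
    have step3 : ∑ J ∈ P, α J.card * ((ℓ:ℝ) * D J + (J.card:ℝ) * (g (A J) - g OPT))
        = ∑ J ∈ P, α J.card * ((ℓ:ℝ) * D J + (J.card:ℝ) * g (A J))
          - (∑ J ∈ P, (J.card:ℝ) * α J.card) * g OPT := by
      rw [Finset.sum_mul, ← Finset.sum_sub_distrib]
      apply Finset.sum_congr rfl
      intro J hJ
      ring
    rw [step2, step3, hsum1, hsum2] at step1
    exact step1
  -- the linear part
  have hAL_img : A L = S.image Prod.fst := by
    show proj S L = _
    unfold proj
    rw [Finset.filter_true_of_mem hS]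
  have hwsum : ∑ p ∈ S, w p.1 = l (A L) := by
    rw [hl, hAL_img]
    exact (Finset.sum_image (f := fun e => w e) (fun p hp q hq hpq => hdist p hp q hq hpq)).symm
  have hlsum1 : ∀ j ∈ L, ∀ p ∈ S, l (A L) - l (proj (S' p j) L) = w p.1 - w (h j p) := by
    intro j hj p hp
    have hproj : proj (S' p j) L = insert (h j p) ((A L).erase p.1) := by
      show proj (insert (h j p, j) (S.erase p)) L = _
      rw [proj_insert', proj_erase' S hdist p hp L]
      simp only [if_pos (hS p hp), if_pos hj]
      rfl
    by_cases hcase : h j p = p.1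
    · rw [hproj, hcase, Finset.insert_erase (hALmem p hp)]
      ring
    · have hnot : h j p ∉ (A L).erase p.1 := by
        intro hmem
        exact hcase (hhfix j hj p hp (Finset.mem_of_mem_erase hmem))
      have h1 : l (insert (h j p) ((A L).erase p.1)) = w (h j p) + (l (A L) - w p.1) := by
        rw [hl, Finset.sum_insert hnot, Finset.sum_erase_eq_sub (hALmem p hp), ← hl]
      rw [hproj, h1]
      ring
  have hlsum : ∑ j ∈ L, ∑ p ∈ S, (l (A L) - l (proj (S' p j) L)) = (ℓ:ℝ) * (l (A L) - l OPT) := by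
    have hj' : ∀ j ∈ L, ∑ p ∈ S, (l (A L) - l (proj (S' p j) L)) = l (A L) - l OPT := by
      intro j hj
      rw [Finset.sum_congr rfl (fun p hp => hlsum1 j hj p hp), Finset.sum_sub_distrib, hwsum,
        hbijsum j hj w, ← hl]
    rw [Finset.sum_congr rfl hj', Finset.sum_const, hLcard, nsmul_eq_mul]
  -- expansion of the potential
  have hPhi : ∀ T : Finset (E × ℕ), Phi ℓ 1 g T = c * β * ∑ J ∈ Pow, α J.card * g (proj T J) := by
    intro T
    have hc3 : (1:ℝ)^3 / (ℓ:ℝ) = c := by rw [hcdef]; norm_num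
    have hγ : (1:ℝ) / (ℓ:ℝ) = c := hcdef.symm
    unfold Phi
    rw [hc3, hγ, ← hβdef, ← hPowdef]
  have hPhidiff : ∀ p ∈ S, ∀ j ∈ L, Φf S - Φf (S' p j) =
      c * β * (∑ J ∈ Pow, α J.card * (g (A J) - g (proj (S' p j) J)))
        + (l (A L) - l (proj (S' p j) L)) := by
    intro p hp j hj
    have hS'eq : Φf (S' p j) = Phi ℓ 1 g (S' p j) + l (proj (S' p j) L) := hΦf (S' p j)
    have hSeq : Φf S = Phi ℓ 1 g S + l (proj S L) := hΦf S
    have hPS : Phi ℓ 1 g S = c * β * ∑ J ∈ Pow, α J.card * g (A J) := hPhi S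
    have hPS' : Phi ℓ 1 g (S' p j) = c * β * ∑ J ∈ Pow, α J.card * g (proj (S' p j) J) :=
      hPhi (S' p j)
    have hAL : proj S L = A L := rfl
    have hsplit : ∑ J ∈ Pow, α J.card * g (A J) - ∑ J ∈ Pow, α J.card * g (proj (S' p j) J)
        = ∑ J ∈ Pow, α J.card * (g (A J) - g (proj (S' p j) J)) := by
      rw [← Finset.sum_sub_distrib]
      apply Finset.sum_congr rfl
      intros; ring
    rw [hSeq, hS'eq, hPS, hPS', hAL]
    linear_combination (c * β) * hsplit
  -- local optimality gives nonnegativity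
  have htotal : (0:ℝ) ≤ ∑ j ∈ L, ∑ p ∈ S, (Φf S - Φf (S' p j)) := by
    apply Finset.sum_nonneg
    intro j hj
    apply Finset.sum_nonneg
    intro p hp
    have hloc := hlocal p hp j hj
    have hS'e : S' p j = insert (h j p, j) (S.erase p) := rfl
    rw [hS'e]
    linarith
  -- expand the total
  have hexpand : ∑ j ∈ L, ∑ p ∈ S, (Φf S - Φf (S' p j)) =
      c * β * (∑ J ∈ Pow, α J.card * (∑ j ∈ L, ∑ p ∈ S, (g (A J) - g (proj (S' p j) J))))
        + (ℓ:ℝ) * (l (A L) - l OPT) := by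
    rw [Finset.sum_congr rfl (fun j hj => Finset.sum_congr rfl (fun p hp => hPhidiff p hp j hj))]
    have e1 : ∀ j ∈ L, ∑ p ∈ S,
        (c * β * (∑ J ∈ Pow, α J.card * (g (A J) - g (proj (S' p j) J)))
          + (l (A L) - l (proj (S' p j) L)))
        = c * β * (∑ p ∈ S, ∑ J ∈ Pow, α J.card * (g (A J) - g (proj (S' p j) J)))
          + ∑ p ∈ S, (l (A L) - l (proj (S' p j) L)) := by
      intro j hj
      rw [Finset.sum_add_distrib, Finset.mul_sum]
    rw [Finset.sum_congr rfl e1, Finset.sum_add_distrib, hlsum]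
    congr 1
    rw [← Finset.mul_sum]
    congr 1
    have e2 : ∀ j ∈ L, ∑ p ∈ S, ∑ J ∈ Pow, α J.card * (g (A J) - g (proj (S' p j) J))
        = ∑ J ∈ Pow, ∑ p ∈ S, α J.card * (g (A J) - g (proj (S' p j) J)) := by
      intro j hj
      exact Finset.sum_comm
    rw [Finset.sum_congr rfl e2, Finset.sum_comm]
    apply Finset.sum_congr rfl
    intro J hJ
    rw [Finset.mul_sum]
    apply Finset.sum_congr rfl
    intro j hj
    rw [Finset.mul_sum]
  -- numeric identities
  have hαℓ : α ℓ = (1+c)^(ℓ-1) := by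
    rw [← hα' ℓ]
    simp [alphaCoef, Nat.choose_self]
  have hcℓ : c * (ℓ:ℝ) = 1 := by
    rw [hcdef]; field_simp
  have hβmul : β * (1+c)^ℓ = 1 := by
    rw [hβdef, ← zpow_natCast (1+c) ℓ, ← zpow_add₀ (ne_of_gt hc1)]
    simp
  have hβℓ1 : β * (1+c)^(ℓ-1) * (1+c) = 1 := by
    rw [mul_assoc, ← pow_succ, Nat.sub_add_cancel hℓ]
    exact hβmul
  have e1 : c * β * ((ℓ:ℝ) * ((ℓ:ℝ)+1) * α ℓ) = (ℓ:ℝ) := by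
    rw [hαℓ]
    linear_combination (β * (1+c)^(ℓ-1) * (ℓ:ℝ)) * hcℓ + (ℓ:ℝ) * hβℓ1
  have e2 : c * β * ((ℓ:ℝ)^2 * ((1+c)^ℓ - 1)) = (ℓ:ℝ) * (1 - β) := by
    linear_combination (β * ((1+c)^ℓ - 1) * (ℓ:ℝ)) * hcℓ + (ℓ:ℝ) * hβmul
  -- put everything together
  have hfinal0 : (0:ℝ) ≤ (ℓ:ℝ) * g (A L) - (ℓ:ℝ) * (1 - β) * g OPT
      + (ℓ:ℝ) * (l (A L) - l OPT) := by
    have h1 : (0:ℝ) ≤ c * β * ((ℓ:ℝ) * ((ℓ:ℝ)+1) * α ℓ * g (A L)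
        - ((ℓ:ℝ)^2 * ((1+c)^ℓ - 1)) * g OPT) + (ℓ:ℝ) * (l (A L) - l OPT) := by
      have h2 := mul_le_mul_of_nonneg_left hbound (by positivity : (0:ℝ) ≤ c * β)
      rw [hexpand] at htotal
      nlinarith [h2, htotal]
    have h3 : c * β * ((ℓ:ℝ) * ((ℓ:ℝ)+1) * α ℓ * g (A L)
        - ((ℓ:ℝ)^2 * ((1+c)^ℓ - 1)) * g OPT)
        = (ℓ:ℝ) * g (A L) - (ℓ:ℝ) * (1 - β) * g OPT := by
      linear_combination (g (A L)) * e1 - (g OPT) * e2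
    linarith
  have hdiv : g (A L) + l (A L) ≥ (1-β) * g OPT + l OPT := by
    have hrw : (ℓ:ℝ) * g (A L) - (ℓ:ℝ) * (1 - β) * g OPT + (ℓ:ℝ) * (l (A L) - l OPT)
        = (ℓ:ℝ) * (g (A L) - (1-β) * g OPT + (l (A L) - l OPT)) := by ring
    rw [hrw] at hfinal0
    have hstep := (mul_le_mul_iff_right₀ hℓR).1 (by linarith : (ℓ:ℝ) * 0 ≤ (ℓ:ℝ) *
      (g (A L) - (1-β) * g OPT + (l (A L) - l OPT)))
    linarith
  -- relate to f
  have hfO_sing : f OPT ≤ ∑ o ∈ OPT, f {o} := by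
    have h1 := union_le_sum_insert f hsub hmono OPT ∅
    simp only [Finset.empty_union, hempty, sub_zero] at h1
    exact h1
  have hlO : (1-κ) * f OPT ≤ l OPT := by
    rw [hl]
    have h1 : ∑ o ∈ OPT, w o = (1-κ) * ∑ o ∈ OPT, f {o} := by
      rw [Finset.mul_sum]
      exact Finset.sum_congr rfl (fun o _ => hw o)
    rw [h1]
    exact mul_le_mul_of_nonneg_left hfO_sing (by linarith)
  have hβle1 : β ≤ 1 := by
    have hY : (1:ℝ) ≤ (1+c)^ℓ := one_le_pow₀ (by linarith)
    nlinarith [hβmul, hβ0]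
  have hfA : f (proj S L) = g (A L) + l (A L) := by
    have hgf : g (A L) = f (proj S L) - l (proj S L) := hg (proj S L)
    have hAL : (A L : Finset E) = proj S L := rfl
    rw [hAL] at hgf ⊢
    linarith
  have hgO : g OPT = f OPT - l OPT := hg OPT
  have hdiv' : f (proj S L) ≥ (1-β) * f OPT + β * l OPT := by
    have hid : (1-β) * g OPT + l OPT = (1-β) * f OPT + β * l OPT := by
      rw [hgO]; ring
    linarith [hdiv, hfA]
  have hm : β * ((1-κ) * f OPT) ≤ β * l OPT := mul_le_mul_of_nonneg_left hlO hβ0.le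
  have hid2 : (1-β) * f OPT + β * ((1-κ) * f OPT) = (1 - κ * β) * f OPT := by ring
  show f (proj S L) ≥ (1 - κ * β) * f OPT
  linarith
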